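/- Online gradient descent regret bound: let f_1,...,f_T : R^d → R be convex differentiable functions, fix η > 0 and θ_1 ∈ R^d, and set θ_{t+1} = θ_t − η∇f_t(θ_t). Then for every θ* ∈ R^d: (1/T)Σ_t f_t(θ_t) ≤ (1/T)Σ_t f_t(θ*) + ‖θ*‖²/(2ηT) + ‖θ_1‖·(1/T)Σ_t ‖∇f_t(θ_t)‖ + η·(1/T)Σ_t ‖∇f_t(θ_t)‖². -/

import Mathlib

open Finset

local notation "⟪" x ", " y "⟫" => @inner ℝ _ _ x y

/-- Gradient inequality for convex differentiable functions. -/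
lemma grad_ineq_aux {E : Type*} [NormedAddCommGroup E] [InnerProductSpace ℝ E]
    [CompleteSpace E] {f : E → ℝ} (hc : ConvexOn ℝ Set.univ f)
    (hd : Differentiable ℝ f) (x y : E) :
    f x + ⟪gradient f x, y - x⟫ ≤ f y := by
  set g : ℝ → ℝ := fun s => f (AffineMap.lineMap x y s) with hg
  have hgc : ConvexOn ℝ Set.univ g := by
    have := hc.comp_affineMap (AffineMap.lineMap x y : ℝ →ᵃ[ℝ] E)
    exact this
  have hcurve : HasDerivAt (fun s : ℝ => AffineMap.lineMap x y s) (y - x) 0 := by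
    have h : HasDerivAt (fun s : ℝ => s • (y - x) + x) ((1:ℝ) • (y - x)) 0 :=
      ((hasDerivAt_id _).smul_const _).add_const _
    simp only [one_smul] at h
    exact h.congr_of_eventuallyEq (Filter.Eventually.of_forall fun s => by
      show (AffineMap.lineMap x y) s = _
      rw [AffineMap.lineMap_apply_module]; module)
  have hgrad : HasFDerivAt f ((InnerProductSpace.toDual ℝ E) (gradient f x)) x :=
    hasGradientAt_iff_hasFDerivAt.mp (hd x).hasGradientAt
  have hder : HasDerivAt g (⟪gradient f x, y - x⟫) 0 := by
    have h := HasFDerivAt.comp_hasDerivAt 0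
      (by simpa using hgrad :
        HasFDerivAt f ((InnerProductSpace.toDual ℝ E) (gradient f x))
          ((fun s : ℝ => AffineMap.lineMap x y s) 0)) hcurve
    exact h
  have hslope := hgc.le_slope_of_hasDerivAt (Set.mem_univ 0) (Set.mem_univ 1)
    zero_lt_one hder
  have h0 : g 0 = f x := by simp [hg]
  have h1 : g 1 = f y := by simp [hg]
  rw [slope_def_field, h0, h1] at hslope
  simp only [div_one, sub_zero] at hslope
  linarith [hslope]

theorem stmt_5 (d T : ℕ) (hT : 0 < T) (η : ℝ) (hη : 0 < η)
    (f : ℕ → EuclideanSpace ℝ (Fin d) → ℝ)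
    (hconv : ∀ t, ConvexOn ℝ Set.univ (f t))
    (hdiff : ∀ t, Differentiable ℝ (f t))
    (θ : ℕ → EuclideanSpace ℝ (Fin d))
    (hupd : ∀ t, θ (t + 1) = θ t - η • gradient (f t) (θ t))
    (θs : EuclideanSpace ℝ (Fin d)) :
    (1 / T : ℝ) * ∑ t ∈ Finset.range T, f t (θ t) ≤
      (1 / T : ℝ) * ∑ t ∈ Finset.range T, f t θs
      + ‖θs‖ ^ 2 / (2 * η * T)
      + ‖θ 0‖ * ((1 / T : ℝ) * ∑ t ∈ Finset.range T, ‖gradient (f t) (θ t)‖)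
      + η * ((1 / T : ℝ) * ∑ t ∈ Finset.range T, ‖gradient (f t) (θ t)‖ ^ 2) := by
  set g : ℕ → EuclideanSpace ℝ (Fin d) := fun t => gradient (f t) (θ t) with hgdef
  set φ : ℕ → EuclideanSpace ℝ (Fin d) := fun t => θ t - θ 0 with hφ
  have hφupd : ∀ t, φ (t + 1) = φ t - η • g t := by
    intro t; simp only [hφ, hupd t]; abel
  -- pointwise key inequality
  have key : ∀ t, f t (θ t) ≤ f t θs + (‖φ t - θs‖ ^ 2 - ‖φ (t+1) - θs‖ ^ 2) / (2 * η)
      + ‖θ 0‖ * ‖g t‖ + (η / 2) * ‖g t‖ ^ 2 := by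
    intro t
    have hgi := grad_ineq_aux (hconv t) (hdiff t) (θ t) θs
    -- norm expansion
    have hexp : ‖φ (t+1) - θs‖ ^ 2
        = ‖φ t - θs‖ ^ 2 - 2 * (η * ⟪g t, φ t - θs⟫) + η ^ 2 * ‖g t‖ ^ 2 := by
      rw [hφupd t, sub_right_comm]
      rw [norm_sub_sq_real (φ t - θs) (η • g t)]
      rw [real_inner_smul_right, norm_smul, real_inner_comm]
      rw [Real.norm_eq_abs, abs_of_pos hη]
      ring
    have hsplit : ⟪g t, θ t - θs⟫ = ⟪g t, φ t - θs⟫ + ⟪g t, θ 0⟫ := by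
      have : θ t - θs = (φ t - θs) + θ 0 := by simp [hφ]; abel
      rw [this, inner_add_right]
    have hcs : ⟪g t, θ 0⟫ ≤ ‖θ 0‖ * ‖g t‖ := by
      calc ⟪g t, θ 0⟫ ≤ ‖g t‖ * ‖θ 0‖ := real_inner_le_norm _ _
        _ = ‖θ 0‖ * ‖g t‖ := mul_comm _ _
    have hsub : ⟪g t, θs - θ t⟫ = -⟪g t, θ t - θs⟫ := by
      rw [← inner_neg_right]; congr 1; abel
    have hgi' : f t (θ t) - f t θs ≤ ⟪g t, θ t - θs⟫ := by
      have := hgi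
      rw [hsub] at this
      linarith
    have hfrac : (‖φ t - θs‖ ^ 2 - ‖φ (t+1) - θs‖ ^ 2) / (2 * η)
        = ⟪g t, φ t - θs⟫ - (η / 2) * ‖g t‖ ^ 2 := by
      rw [hexp]; field_simp; ring
    rw [hfrac]
    nlinarith [hgi', hsplit, hcs]
  -- sum it
  have hsum : ∑ t ∈ range T, f t (θ t) ≤ ∑ t ∈ range T, f t θs
      + ‖θs‖ ^ 2 / (2 * η)
      + ‖θ 0‖ * ∑ t ∈ range T, ‖g t‖
      + (η / 2) * ∑ t ∈ range T, ‖g t‖ ^ 2 := by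
    have h1 : ∑ t ∈ range T, f t (θ t)
        ≤ ∑ t ∈ range T, (f t θs + (‖φ t - θs‖ ^ 2 - ‖φ (t+1) - θs‖ ^ 2) / (2 * η)
            + ‖θ 0‖ * ‖g t‖ + (η / 2) * ‖g t‖ ^ 2) :=
      Finset.sum_le_sum fun t _ => key t
    have h2 : ∑ t ∈ range T, (‖φ t - θs‖ ^ 2 - ‖φ (t+1) - θs‖ ^ 2)
        = ‖φ 0 - θs‖ ^ 2 - ‖φ T - θs‖ ^ 2 :=
      Finset.sum_range_sub' (fun t => ‖φ t - θs‖ ^ 2) T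
    have hφ0 : ‖φ 0 - θs‖ ^ 2 = ‖θs‖ ^ 2 := by
      simp [hφ]
    have h3 : ∑ t ∈ range T, (‖φ t - θs‖ ^ 2 - ‖φ (t+1) - θs‖ ^ 2) ≤ ‖θs‖ ^ 2 := by
      rw [h2, hφ0]
      nlinarith [sq_nonneg ‖φ T - θs‖]
    have h2η : (0:ℝ) < 2 * η := by linarith
    calc ∑ t ∈ range T, f t (θ t)
        ≤ ∑ t ∈ range T, (f t θs + (‖φ t - θs‖ ^ 2 - ‖φ (t+1) - θs‖ ^ 2) / (2 * η)
            + ‖θ 0‖ * ‖g t‖ + (η / 2) * ‖g t‖ ^ 2) := h1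
      _ = ∑ t ∈ range T, f t θs
            + (∑ t ∈ range T, (‖φ t - θs‖ ^ 2 - ‖φ (t+1) - θs‖ ^ 2)) / (2 * η)
            + ‖θ 0‖ * ∑ t ∈ range T, ‖g t‖
            + (η / 2) * ∑ t ∈ range T, ‖g t‖ ^ 2 := by
          rw [Finset.sum_add_distrib, Finset.sum_add_distrib, Finset.sum_add_distrib,
            ← Finset.sum_div, ← Finset.mul_sum, ← Finset.mul_sum]
      _ ≤ _ := by
          gcongr
  -- final arithmetic
  have hTpos : (0:ℝ) < T := by exact_mod_cast hT
  have hC : 0 ≤ ∑ t ∈ range T, ‖g t‖ := Finset.sum_nonneg fun t _ => norm_nonneg _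
  have hD : 0 ≤ ∑ t ∈ range T, ‖g t‖ ^ 2 := Finset.sum_nonneg fun t _ => sq_nonneg _
  have hsum2 : ∑ t ∈ range T, f t (θ t) ≤ ∑ t ∈ range T, f t θs
      + ‖θs‖ ^ 2 / (2 * η)
      + ‖θ 0‖ * ∑ t ∈ range T, ‖g t‖
      + η * ∑ t ∈ range T, ‖g t‖ ^ 2 := by
    nlinarith [hsum]
  have hmul := mul_le_mul_of_nonneg_left hsum2 (le_of_lt (by positivity : (0:ℝ) < 1/T))
  calc (1 / T : ℝ) * ∑ t ∈ range T, f t (θ t)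
      ≤ (1 / T : ℝ) * (∑ t ∈ range T, f t θs + ‖θs‖ ^ 2 / (2 * η)
          + ‖θ 0‖ * ∑ t ∈ range T, ‖g t‖ + η * ∑ t ∈ range T, ‖g t‖ ^ 2) := hmul
    _ = (1 / T : ℝ) * ∑ t ∈ range T, f t θs
        + ‖θs‖ ^ 2 / (2 * η * T)
        + ‖θ 0‖ * ((1 / T : ℝ) * ∑ t ∈ range T, ‖g t‖)
        + η * ((1 / T : ℝ) * ∑ t ∈ range T, ‖g t‖ ^ 2) := by
        field_simp
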